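/- Let (z_n)_{n≥1} be a sequence of positive real numbers with ∑_{n=1}^∞ 1/z_n < ∞, let f : ℂ → ℂ be the entire function f(z) = ∏_{n=1}^∞ (1 + z/z_n), and define φ(t) = ∑_{n=1}^∞ exp(-z_n t) for t > 0. Then for every complex number z with Re z > 0 one has f(z) = exp( ∫_0^∞ ((1 - e^{-z t})/t) · φ(t) dt ). -/

import Mathlib

open MeasureTheory Real Set

lemma cexp_integrable {c : ℂ} (hc : 0 < c.re) :
    IntegrableOn (fun t : ℝ => Complex.exp (-c * t)) (Ioi (0:ℝ)) := by
  apply Integrable.mono' (g := fun t : ℝ => Real.exp (-c.re * t))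
    (exp_neg_integrableOn_Ioi 0 hc)
  · exact (Complex.continuous_exp.comp (by fun_prop)).aestronglyMeasurable
  · filter_upwards with t
    rw [Complex.norm_exp]
    simp [Complex.mul_re]

lemma cexp_integral {c : ℂ} (hc : 0 < c.re) :
    ∫ t in Ioi (0:ℝ), Complex.exp (-c * t) = 1 / c := by
  have hc0 : c ≠ 0 := by intro h; simp [h] at hc
  have := integral_Ioi_of_hasDerivAt_of_tendsto
    (f := fun t : ℝ => -Complex.exp (-c * t) / c)
    (f' := fun t : ℝ => Complex.exp (-c * t)) (a := 0) (m := 0)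
    ?_ ?_ (cexp_integrable hc) ?_
  · rw [this]; field_simp; simp
  · exact ((Complex.continuous_exp.comp (by fun_prop)).neg.div_const c).continuousWithinAt
  · intro x hx
    have h1 : HasDerivAt (fun t : ℝ => Complex.exp (-c * t))
        (Complex.exp (-c * x) * (-c)) x := by
      have : HasDerivAt (fun u : ℂ => Complex.exp (-c * u))
          (Complex.exp (-c * x) * (-c)) (x : ℂ) := by
        have h := (Complex.hasDerivAt_exp (-c * x)).comp (x:ℂ)
          ((hasDerivAt_id (x:ℂ)).const_mul (-c))
        simpa [Function.comp_def, mul_comm] using h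
      exact this.comp_ofReal
    simpa [neg_div, mul_div_assoc, mul_comm, mul_div_cancel_right₀, hc0] using
      (h1.neg.div_const c)
  · have h0 : Filter.Tendsto (fun t : ℝ => Complex.exp (-c * t)) Filter.atTop (nhds 0) := by
      rw [tendsto_zero_iff_norm_tendsto_zero]
      simp only [Complex.norm_exp]
      have he : ∀ t : ℝ, (-c * t).re = (-c.re) * t := by intro t; simp [Complex.mul_re]
      simp only [he]
      have : Filter.Tendsto (fun t : ℝ => (-c.re) * t) Filter.atTop Filter.atBot :=
        (Filter.tendsto_id (α := ℝ)).const_mul_atTop_of_neg (by linarith)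
      exact Real.tendsto_exp_atBot.comp this
    simpa using (h0.neg.div_const c)
lemma one_sub_exp_bound {w : ℂ} (hw : 0 ≤ w.re) : ‖1 - Complex.exp (-w)‖ ≤ ‖w‖ := by
  have hderiv : ∀ σ : ℝ, σ ∈ uIcc (0:ℝ) 1 → HasDerivAt (fun σ : ℝ => -Complex.exp (-(σ:ℂ) * w))
      (w * Complex.exp (-(σ:ℝ) * w)) σ := by
    intro σ _
    have h : HasDerivAt (fun u : ℂ => -Complex.exp (-u * w))
        (w * Complex.exp (-(σ:ℂ) * w)) (σ : ℂ) := by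
      have h1 : HasDerivAt (fun u : ℂ => -u * w) (-w) (σ:ℂ) := by
        simpa using ((hasDerivAt_id (σ:ℂ)).neg.mul_const w)
      have h2 := ((Complex.hasDerivAt_exp (-(σ:ℂ) * w)).comp (σ:ℂ) h1).neg
      simpa [Function.comp_def, mul_comm, Pi.neg_def] using h2
    have := h.comp_ofReal
    simpa using this
  have hint : ∫ σ in (0:ℝ)..1, w * Complex.exp (-(σ:ℝ) * w) = 1 - Complex.exp (-w) := by
    rw [intervalIntegral.integral_eq_sub_of_hasDerivAt hderiv]
    · push_cast; ring_nf; simp [sub_eq_add_neg, add_comm]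
    · apply Continuous.intervalIntegrable
      exact continuous_const.mul (Complex.continuous_exp.comp (by fun_prop))
  rw [← hint]
  have := intervalIntegral.norm_integral_le_of_norm_le_const
    (C := ‖w‖) (f := fun σ : ℝ => w * Complex.exp (-(σ:ℝ) * w)) (a := 0) (b := 1) ?_
  · simpa using this
  · intro σ hσ
    rw [uIoc_of_le zero_le_one] at hσ
    rw [norm_mul, Complex.norm_exp]
    have : (-(σ:ℂ) * w).re = -(σ * w.re) := by simp [Complex.mul_re]
    rw [this]
    nlinarith [Real.exp_le_one_iff.mpr (by nlinarith [hσ.1.le] : -(σ * w.re) ≤ 0),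
      norm_nonneg w, Real.exp_pos (-(σ * w.re))]
lemma frullani {a : ℝ} (ha : 0 < a) {s : ℂ} (hs : 0 < s.re) :
    ∫ t in Ioi (0:ℝ), ((1 - Complex.exp (-s * t)) / t) * Complex.exp (-(a:ℝ) * t : ℂ)
      = Complex.log ((a:ℂ) + s) - Complex.log (a:ℂ) := by
  set K : ℝ → ℝ → ℂ := fun t σ => s * Complex.exp (-((a:ℂ) + σ * s) * t) with hK
  have hre : ∀ σ : ℝ, 0 ≤ σ → 0 < ((a:ℂ) + σ * s).re := by
    intro σ hσ
    simp only [Complex.add_re, Complex.ofReal_re, Complex.mul_re, Complex.ofReal_im]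
    have : (σ:ℂ).re = σ := rfl
    nlinarith [mul_nonneg hσ hs.le, (σ:ℂ).im, Complex.ofReal_im σ]
  -- pointwise identity
  have hpt : ∀ t : ℝ, t ∈ Ioi (0:ℝ) →
      ((1 - Complex.exp (-s * t)) / t) * Complex.exp (-(a:ℝ) * t : ℂ)
        = ∫ σ in Ioc (0:ℝ) 1, K t σ := by
    intro t ht
    have ht0 : (t:ℂ) ≠ 0 := by exact_mod_cast (ne_of_gt (mem_Ioi.mp ht))
    have hd : ∀ σ : ℝ, σ ∈ uIcc (0:ℝ) 1 →
        HasDerivAt (fun σ : ℝ => -(1/(t:ℂ)) * Complex.exp (-((a:ℂ) + (σ:ℝ) * s) * t))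
          (K t σ) σ := by
      intro σ _
      have h : HasDerivAt (fun u : ℂ => -(1/(t:ℂ)) * Complex.exp (-((a:ℂ) + u * s) * t))
          (K t σ) (σ : ℂ) := by
        have h1 : HasDerivAt (fun u : ℂ => -((a:ℂ) + u * s) * t) (-(s * t)) (σ:ℂ) := by
          have : HasDerivAt (fun u : ℂ => (a:ℂ) + u * s) s (σ:ℂ) := by
            simpa using ((hasDerivAt_id (σ:ℂ)).mul_const s).const_add (a:ℂ)
          simpa [neg_mul] using (this.neg.mul_const (t:ℂ))
        have h2 := ((Complex.hasDerivAt_exp _).comp (σ:ℂ) h1).const_mul (-(1/(t:ℂ)))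
        have : -(1/(t:ℂ)) * (Complex.exp (-((a:ℂ) + (σ:ℂ) * s) * t) * -(s * t)) = K t σ := by
          rw [hK]; field_simp
        rw [← this]
        simpa [Function.comp_def] using h2
      simpa using h.comp_ofReal
    have hint : ∫ σ in (0:ℝ)..1, K t σ
        = -(1/(t:ℂ)) * Complex.exp (-((a:ℂ) + 1 * s) * t)
          - (-(1/(t:ℂ)) * Complex.exp (-((a:ℂ) + 0 * s) * t)) := by
      have := intervalIntegral.integral_eq_sub_of_hasDerivAt hd ?_
      · simpa using this
      · apply Continuous.intervalIntegrable
        exact continuous_const.mul (Complex.continuous_exp.comp (by fun_prop))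
    rw [← intervalIntegral.integral_of_le zero_le_one, hint]
    field_simp
    rw [mul_zero, add_zero, show -((t:ℂ) * ((a:ℂ) + s)) = -(s*(t:ℂ)) + -((t:ℂ)*(a:ℂ)) by ring, Complex.exp_add]
    ring
  rw [setIntegral_congr_fun measurableSet_Ioi hpt]
  -- Fubini
  have hmeas : Continuous (Function.uncurry K) := by
    apply continuous_const.mul
    exact Complex.continuous_exp.comp (by fun_prop)
  have hKint : Integrable (Function.uncurry K)
      ((volume.restrict (Ioi (0:ℝ))).prod (volume.restrict (Ioc (0:ℝ) 1))) := by
    apply Integrable.mono' (g := fun p : ℝ × ℝ => (‖s‖ * Real.exp (-a * p.1)) * 1)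
    · exact Integrable.mul_prod
        ((exp_neg_integrableOn_Ioi 0 ha).const_mul ‖s‖)
        (integrable_const 1)
    · exact hmeas.aestronglyMeasurable
    · rw [Measure.prod_restrict]
      filter_upwards [ae_restrict_mem (measurableSet_Ioi.prod measurableSet_Ioc)]
        with p hp
      obtain ⟨hp1, hp2⟩ := hp
      simp only [Function.uncurry, hK, norm_mul, mul_one,
        Complex.norm_exp]
      apply mul_le_mul_of_nonneg_left _ (norm_nonneg s)
      have : (-((a:ℂ) + (p.2:ℝ) * s) * p.1).re = -((a + p.2 * s.re) * p.1) := by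
        simp [Complex.mul_re, Complex.add_re, Complex.add_im]; ring
      rw [this]
      apply Real.exp_le_exp.mpr
      have h1 : 0 ≤ p.2 * s.re * p.1 :=
        mul_nonneg (mul_nonneg hp2.1.le hs.le) (le_of_lt hp1)
      nlinarith
  rw [integral_integral_swap hKint]
  -- inner integral
  have hinner : ∀ σ : ℝ, σ ∈ Ioc (0:ℝ) 1 →
      ∫ t in Ioi (0:ℝ), K t σ = s / ((a:ℂ) + σ * s) := by
    intro σ hσ
    simp only [hK]
    rw [integral_const_mul]
    have := cexp_integral (hre σ hσ.1.le)
    rw [this]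
    ring
  rw [setIntegral_congr_fun measurableSet_Ioc hinner,
    ← intervalIntegral.integral_of_le zero_le_one]
  have hne : ∀ σ : ℝ, σ ∈ uIcc (0:ℝ) 1 → ((a:ℂ) + σ * s) ≠ 0 := by
    intro σ hσ
    have := hre σ (by simpa using hσ.1)
    intro h; rw [h] at this; simp at this
  have hftc := intervalIntegral.integral_eq_sub_of_hasDerivAt
    (f := fun σ : ℝ => Complex.log ((a:ℂ) + σ * s))
    (f' := fun σ : ℝ => s / ((a:ℂ) + σ * s)) (a := 0) (b := 1) ?_ ?_
  · rw [hftc]; norm_num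
  · intro σ hσ
    have hx : ((a:ℂ) + σ * s) ∈ Complex.slitPlane :=
      Or.inl (hre σ (by simpa using hσ.1))
    have h1 : HasDerivAt (fun u : ℂ => (a:ℂ) + u * s) s (σ:ℂ) := by
      simpa using ((hasDerivAt_id (σ:ℂ)).mul_const s).const_add (a:ℂ)
    have h2 := (Complex.hasDerivAt_log hx).comp (σ:ℂ) h1
    have h3 := h2.comp_ofReal
    simp only [Function.comp_def] at h3
    convert h3 using 1
    · rfl
    · ring
  · apply ContinuousOn.intervalIntegrable
    exact continuousOn_const.div (by fun_prop) hne
lemma rexp_integral {b : ℝ} (hb : 0 < b) :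
    ∫ t in Ioi (0:ℝ), Real.exp (-b * t) = 1 / b := by
  have := integral_Ioi_of_hasDerivAt_of_tendsto
    (f := fun t : ℝ => -Real.exp (-b * t) / b)
    (f' := fun t : ℝ => Real.exp (-b * t)) (a := 0) (m := 0)
    ?_ ?_ (exp_neg_integrableOn_Ioi 0 hb) ?_
  · rw [this]; field_simp; simp
  · exact ((Real.continuous_exp.comp (by fun_prop)).neg.div_const b).continuousWithinAt
  · intro x hx
    have h : HasDerivAt (fun t : ℝ => Real.exp (-b * t)) (Real.exp (-b * x) * (-b)) x := by
      simpa [Function.comp_def, mul_comm] using (Real.hasDerivAt_exp (-b * x)).comp x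
        ((hasDerivAt_id x).const_mul (-b))
    have := (h.neg.div_const b)
    simpa [neg_mul, mul_comm, mul_div_assoc, mul_div_cancel_right₀, hb.ne'] using this
  · have h0 : Filter.Tendsto (fun t : ℝ => Real.exp (-b * t)) Filter.atTop (nhds 0) := by
      have : Filter.Tendsto (fun t : ℝ => (-b) * t) Filter.atTop Filter.atBot :=
        (Filter.tendsto_id (α := ℝ)).const_mul_atTop_of_neg (by linarith)
      exact Real.tendsto_exp_atBot.comp this
    simpa using (h0.neg.div_const b)


/-- For `f(z) = ∏ (1 + z/zₙ)` with positive `zₙ`, `∑ 1/zₙ < ∞`,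
`φ(t) = ∑ exp(-zₙ t)`, and any `z` with `Re z > 0`:
`f(z) = exp(∫_0^∞ ((1 - e^{-zt})/t) φ(t) dt)`. -/
theorem stmt_9 (z : ℕ → ℝ) (hz : ∀ n, 0 < z n)
    (hsum : Summable fun n => 1 / z n)
    (f : ℂ → ℂ) (hf : ∀ s : ℂ, f s = ∏' n, (1 + s / (z n : ℂ)))
    (s : ℂ) (hs : 0 < s.re) :
    f s = Complex.exp (∫ t in Ioi (0 : ℝ),
      ((1 - Complex.exp (-s * (t : ℂ))) / (t : ℂ)) *
        ((∑' n, Real.exp (-(z n) * t) : ℝ) : ℂ)) := by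
  set F : ℕ → ℝ → ℂ := fun n t =>
    ((1 - Complex.exp (-s * (t : ℂ))) / (t : ℂ)) * ((Real.exp (-(z n) * t) : ℝ) : ℂ) with hF
  -- basic norm bound
  have hbound : ∀ n : ℕ, ∀ t ∈ Ioi (0:ℝ), ‖F n t‖ ≤ ‖s‖ * Real.exp (-(z n) * t) := by
    intro n t ht
    rw [mem_Ioi] at ht
    have h1 : ‖1 - Complex.exp (-(s * t))‖ ≤ ‖s‖ * t := by
      have h2 : ‖1 - Complex.exp (-(s * (t:ℂ)))‖ ≤ ‖s * (t:ℂ)‖ := by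
        apply one_sub_exp_bound
        simp only [Complex.mul_re, Complex.ofReal_re, Complex.ofReal_im]
        nlinarith [hs.le]
      simpa [norm_mul, Complex.norm_real, Real.norm_eq_abs, abs_of_pos ht] using h2
    rw [hF]
    simp only [norm_mul, norm_div]
    have ht' : ‖(t:ℂ)‖ = t := by rw [Complex.norm_real, Real.norm_eq_abs, abs_of_pos ht]
    rw [ht', Complex.norm_real, Real.norm_eq_abs, abs_of_pos (Real.exp_pos _)]
    apply mul_le_mul_of_nonneg_right _ (Real.exp_pos _).le
    rw [div_le_iff₀ ht, neg_mul]
    exact h1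
  -- measurability
  have hmeasF : ∀ n : ℕ, AEStronglyMeasurable (F n) (volume.restrict (Ioi (0:ℝ))) := by
    intro n
    apply ContinuousOn.aestronglyMeasurable _ measurableSet_Ioi
    apply ContinuousOn.mul
    · apply ContinuousOn.div
      · exact (continuous_const.sub (Complex.continuous_exp.comp (by fun_prop))).continuousOn
      · fun_prop
      · intro t ht
        exact_mod_cast (ne_of_gt (mem_Ioi.mp ht))
    · exact (Complex.continuous_ofReal.comp (Real.continuous_exp.comp (by fun_prop))).continuousOn
  -- integrability
  have hintg : ∀ n : ℕ, IntegrableOn (fun t => ‖s‖ * Real.exp (-(z n) * t)) (Ioi (0:ℝ)) :=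
    fun n => (exp_neg_integrableOn_Ioi 0 (hz n)).const_mul ‖s‖
  have hintF : ∀ n : ℕ, IntegrableOn (F n) (Ioi (0:ℝ)) := by
    intro n
    apply Integrable.mono' (hintg n) (hmeasF n)
    filter_upwards [ae_restrict_mem measurableSet_Ioi] with t ht
    exact hbound n t ht
  have hgint : ∀ n : ℕ, ∫ t in Ioi (0:ℝ), ‖s‖ * Real.exp (-(z n) * t) = ‖s‖ * (1 / z n) := by
    intro n
    rw [integral_const_mul, rexp_integral (hz n)]
  -- value of each integral
  have hval : ∀ n : ℕ, ∫ t in Ioi (0:ℝ), F n t = Complex.log (1 + s / (z n : ℂ)) := by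
    intro n
    have h1 : ∫ t in Ioi (0:ℝ), F n t
        = ∫ t in Ioi (0:ℝ), ((1 - Complex.exp (-s * t)) / t) * Complex.exp (-(z n : ℝ) * t : ℂ) := by
      apply setIntegral_congr_fun measurableSet_Ioi
      intro t _
      show (1 - Complex.exp (-s * (t:ℂ))) / (t:ℂ) * ((Real.exp (-(z n) * t) : ℝ) : ℂ) = _
      rw [Complex.ofReal_exp]
      push_cast
      ring_nf
    rw [h1, frullani (hz n) hs]
    have hzn : ((z n : ℂ)) ≠ 0 := by exact_mod_cast (hz n).ne'
    have hne : ((z n : ℂ) + s) ≠ 0 := by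
      intro h
      have : ((z n : ℂ) + s).re = 0 := by rw [h]; simp
      simp only [Complex.add_re, Complex.ofReal_re] at this
      nlinarith [hz n]
    have h2 : (1 : ℂ) + s / (z n : ℂ) = ((z n : ℂ) + s) * (((z n)⁻¹ : ℝ) : ℂ) := by
      push_cast
      field_simp
    rw [h2, Complex.log_mul_ofReal _ (inv_pos.mpr (hz n)) _ hne, Real.log_inv,
      ← Complex.ofReal_log (hz n).le]
    push_cast
    ring
  -- summability of the logs
  have hsummlog : Summable fun n => Complex.log (1 + s / (z n : ℂ)) := by
    apply Summable.of_norm_bounded (g := fun n => ‖s‖ * (1 / z n)) (hsum.mul_left ‖s‖)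
    intro n
    rw [← hval n, ← hgint n]
    apply norm_integral_le_of_norm_le (hintg n)
    filter_upwards [ae_restrict_mem measurableSet_Ioi] with t ht
    exact hbound n t ht
  -- swap integral and sum
  have hswap : (∫ t in Ioi (0:ℝ),
      ((1 - Complex.exp (-s * (t : ℂ))) / (t : ℂ)) *
        ((∑' n, Real.exp (-(z n) * t) : ℝ) : ℂ))
      = ∑' n, ∫ t in Ioi (0:ℝ), F n t := by
    rw [show (∫ t in Ioi (0:ℝ),
        ((1 - Complex.exp (-s * (t : ℂ))) / (t : ℂ)) *
          ((∑' n, Real.exp (-(z n) * t) : ℝ) : ℂ))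
        = ∫ t in Ioi (0:ℝ), ∑' n, F n t from ?_]
    · apply integral_tsum hmeasF
      apply ne_of_lt
      calc ∑' n, ∫⁻ t in Ioi (0:ℝ), ‖F n t‖₊
          ≤ ∑' n, ENNReal.ofReal (‖s‖ * (1 / z n)) := by
            apply ENNReal.tsum_le_tsum
            intro n
            rw [← hgint n, ofReal_integral_eq_lintegral_ofReal (hintg n)]
            · apply lintegral_mono_ae
              filter_upwards [ae_restrict_mem measurableSet_Ioi] with t ht
              rw [← enorm_eq_nnnorm, ← ofReal_norm]
              exact ENNReal.ofReal_le_ofReal (hbound n t ht)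
            · filter_upwards with t
              positivity
        _ < ⊤ := by
            rw [← ENNReal.ofReal_tsum_of_nonneg
              (fun n => mul_nonneg (norm_nonneg s) (one_div_nonneg.mpr (hz n).le))
              (hsum.mul_left ‖s‖)]
            exact ENNReal.ofReal_lt_top
    · apply setIntegral_congr_fun measurableSet_Ioi
      intro t ht
      beta_reduce
      rw [Complex.ofReal_tsum, tsum_mul_left]
  rw [hswap, hf s]
  have key := Complex.cexp_tsum_eq_tprod (f := fun n => 1 + s / (z n : ℂ)) ?_ ?_
  · 
    rw [show (∑' n, ∫ t in Ioi (0:ℝ), F n t) = ∑' n, Complex.log (1 + s / (z n:ℂ)) from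
      tsum_congr fun n => hval n]
    exact key.symm
  · intro n h
    have h' : (1:ℂ) + s / (z n : ℂ) = 0 := h
    have h2 : ((1:ℂ) + s / (z n : ℂ)).re = 0 := by rw [h']; simp
    rw [Complex.add_re, Complex.one_re, Complex.div_ofReal_re] at h2
    nlinarith [div_pos hs (hz n)]
  · exact hsummlog
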